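/- Let q, z ∈ ℂ with 0 < |q| < 1, z ≠ 0, and z ≠ q^k for every nonzero integer k. Then 1/((zq;q)_∞ (z⁻¹q;q)_∞) = 2 − z − z⁻¹ + (z + z⁻¹)·Ũ₁(z,q) − Ũ₂(z,q). -/

import Mathlib

/-- The finite q-Pochhammer symbol `(z;q)_n = ∏_{i=0}^{n-1} (1 - z q^i)`. -/
noncomputable def qPoch (z q : ℂ) (n : ℕ) : ℂ := ∏ i ∈ Finset.range n, (1 - z * q ^ i)

/-- The infinite q-Pochhammer symbol `(z;q)_∞ = ∏_{i=0}^{∞} (1 - z q^i)`. -/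
noncomputable def qPochInf (z q : ℂ) : ℂ := ∏' i : ℕ, (1 - z * q ^ i)

/-- The rank generating function `Ũ_k(z,q) = ∑_{n=0}^∞ q^{kn} / ((zq;q)_n (z⁻¹q;q)_n)`
for unimodal sequences with a k-fold peak. -/
noncomputable def tildeU (k : ℕ) (z q : ℂ) : ℂ :=
  ∑' n : ℕ, q ^ (k * n) / (qPoch (z * q) q n * qPoch (z⁻¹ * q) q n)

open Filter Topology Finset

lemma aux_summable_log (w q : ℂ) (hq : ‖q‖ < 1) :
    Summable fun n : ℕ => Complex.log (1 - w * q ^ n) := by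
  have hgeo : Summable fun n : ℕ => (3/2 : ℝ) * (‖w‖ * ‖q‖ ^ n) :=
    (((summable_geometric_of_lt_one (norm_nonneg q) hq).mul_left ‖w‖).mul_left _)
  apply Summable.of_norm_bounded_eventually_nat hgeo
  have h0 : Tendsto (fun n : ℕ => ‖w‖ * ‖q‖ ^ n) atTop (𝓝 0) := by
    simpa using (tendsto_pow_atTop_nhds_zero_of_norm_lt_one (by simpa using hq)).const_mul ‖w‖
  filter_upwards [h0.eventually_le_const (by norm_num : (0:ℝ) < 1/2)] with n hn
  have hnorm : ‖-(w * q ^ n)‖ ≤ 1/2 := by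
    simpa [norm_mul, norm_pow] using hn
  calc ‖Complex.log (1 - w * q ^ n)‖
      = ‖Complex.log (1 + -(w * q ^ n))‖ := by ring_nf
    _ ≤ (3/2) * ‖-(w * q ^ n)‖ := Complex.norm_log_one_add_half_le_self hnorm
    _ ≤ (3/2) * (‖w‖ * ‖q‖ ^ n) := by
        rw [norm_neg, norm_mul, norm_pow]

lemma aux_mult (w q : ℂ) (hq : ‖q‖ < 1) (h : ∀ n : ℕ, 1 - w * q ^ n ≠ 0) :
    Multipliable (fun n : ℕ => 1 - w * q ^ n) ∧ qPochInf w q ≠ 0 := by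
  have hs : ∀ _ : Unit, Summable fun n : ℕ => Complex.log (1 - w * q ^ n) :=
    fun _ => aux_summable_log w q hq
  constructor
  · exact Complex.multipliable_of_summable_log (hs ())
  · have := Complex.cexp_tsum_eq_tprod (f := fun n => 1 - w * q ^ n)
      (fun n => h n) (hs ())
    rw [qPochInf]
    rw [show (∏' i : ℕ, (1 - w * q ^ i)) = _ from this.symm]
    exact Complex.exp_ne_zero _

/-- For `0 < |q| < 1`, `z ≠ 0`, `z ≠ q^k` for all nonzero integers `k`,
`1/((zq;q)_∞ (z⁻¹q;q)_∞) = 2 − z − z⁻¹ + (z + z⁻¹)·Ũ₁(z,q) − Ũ₂(z,q)`. -/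
theorem recip_pochInf_eq_tildeU (q z : ℂ)
    (hq0 : 0 < ‖q‖) (hq1 : ‖q‖ < 1)
    (hz0 : z ≠ 0) (hzq : ∀ k : ℤ, k ≠ 0 → z ≠ q ^ k) :
    (qPochInf (z * q) q * qPochInf (z⁻¹ * q) q)⁻¹
      = 2 - z - z⁻¹ + (z + z⁻¹) * tildeU 1 z q - tildeU 2 z q := by
  have hq : ‖q‖ < 1 := hq1
  have hqne : q ≠ 0 := by
    intro h; simp [h] at hq0
  -- the factors are nonzero
  have hA : ∀ i : ℕ, 1 - (z * q) * q ^ i ≠ 0 := by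
    intro i h
    have hzv : z * q ^ (i + 1) = 1 := by linear_combination -h
    have h2 : z = (q ^ (i + 1))⁻¹ := eq_inv_of_mul_eq_one_left (by linear_combination hzv)
    have : z = q ^ (-((i + 1 : ℕ) : ℤ)) := by
      rw [zpow_neg, zpow_natCast]; exact h2
    exact hzq (-((i + 1 : ℕ) : ℤ)) (by omega) this
  have hB : ∀ i : ℕ, 1 - (z⁻¹ * q) * q ^ i ≠ 0 := by
    intro i h
    have hzv : z⁻¹ * q ^ (i + 1) = 1 := by linear_combination -h
    have h2 : q ^ (i + 1) = (z⁻¹)⁻¹ := eq_inv_of_mul_eq_one_left (by linear_combination hzv)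
    rw [inv_inv] at h2
    exact hzq ((i + 1 : ℕ) : ℤ) (by omega) (by rw [zpow_natCast]; exact h2.symm)
  have hPA : ∀ n, qPoch (z * q) q n ≠ 0 := fun n =>
    Finset.prod_ne_zero_iff.mpr fun i _ => hA i
  have hPB : ∀ n, qPoch (z⁻¹ * q) q n ≠ 0 := fun n =>
    Finset.prod_ne_zero_iff.mpr fun i _ => hB i
  set P : ℕ → ℂ := fun n => qPoch (z * q) q n * qPoch (z⁻¹ * q) q n with hPdef
  have hP : ∀ n, P n ≠ 0 := fun n => mul_ne_zero (hPA n) (hPB n)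
  obtain ⟨hmA, hLA⟩ := aux_mult (z * q) q hq hA
  obtain ⟨hmB, hLB⟩ := aux_mult (z⁻¹ * q) q hq hB
  set L : ℂ := qPochInf (z * q) q * qPochInf (z⁻¹ * q) q with hLdef
  have hL : L ≠ 0 := mul_ne_zero hLA hLB
  have hPL : Tendsto P atTop (𝓝 L) := by
    exact hmA.hasProd.tendsto_prod_nat.mul hmB.hasProd.tendsto_prod_nat
  have hPLi : Tendsto (fun n => (P n)⁻¹) atTop (𝓝 L⁻¹) := hPL.inv₀ hL
  -- boundedness of the inverses
  obtain ⟨C, hC⟩ := (hPLi.norm.bddAbove_range).imp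
    (fun C hC => fun n => hC (Set.mem_range_self n))
  -- summability
  have hCnn : 0 ≤ C := le_trans (norm_nonneg _) (hC 0)
  have hgeo : Summable fun n : ℕ => C * ‖q‖ ^ n :=
    (summable_geometric_of_lt_one (norm_nonneg q) hq).mul_left C
  have hsum : ∀ k : ℕ, 1 ≤ k → Summable fun n : ℕ => q ^ (k * n) / P n := by
    intro k hk
    apply Summable.of_norm_bounded hgeo
    intro n
    rw [div_eq_mul_inv, norm_mul, norm_pow]
    calc ‖q‖ ^ (k * n) * ‖(P n)⁻¹‖ ≤ ‖q‖ ^ n * C := by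
          apply mul_le_mul _ (hC n) (norm_nonneg _) (by positivity)
          exact pow_le_pow_of_le_one (norm_nonneg q) hq.le (Nat.le_mul_of_pos_left n hk)
      _ = C * ‖q‖ ^ n := mul_comm _ _
  have hs1 := hsum 1 le_rfl
  have hs2 := hsum 2 one_le_two
  set c : ℕ → ℂ := fun n => (z + z⁻¹) * (q ^ (1 * n) / P n) - q ^ (2 * n) / P n with hcdef
  have hsc : Summable c := (hs1.mul_left _).sub hs2
  -- telescoping partial sums
  have key : ∀ N : ℕ, ∑ n ∈ Finset.range (N + 1), c n = z + z⁻¹ - 2 + (P N)⁻¹ := by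
    intro N
    induction N with
    | zero =>
      simp only [Finset.range_one, Finset.sum_singleton, hcdef, hPdef]
      simp [qPoch]
      ring
    | succ N ih =>
      rw [Finset.sum_range_succ, ih]
      have hstep : P (N + 1) = P N * ((1 - (z * q) * q ^ N) * (1 - (z⁻¹ * q) * q ^ N)) := by
        simp only [hPdef, qPoch, Finset.prod_range_succ]
        ring
      have hc : c (N + 1) = (P (N + 1))⁻¹ - (P N)⁻¹ := by
        have h1 := hP (N + 1)
        have h0 := hP N
        have hzz : z * z⁻¹ = 1 := mul_inv_cancel₀ hz0
        apply mul_right_cancel₀ h1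
        have lhs : c (N + 1) * P (N + 1)
            = (z + z⁻¹) * q ^ (1 * (N + 1)) - q ^ (2 * (N + 1)) := by
          simp only [hcdef]
          field_simp
        rw [lhs, sub_mul, inv_mul_cancel₀ h1, hstep,
          show (P N)⁻¹ * (P N * ((1 - z * q * q ^ N) * (1 - z⁻¹ * q * q ^ N)))
            = (P N)⁻¹ * P N * ((1 - z * q * q ^ N) * (1 - z⁻¹ * q * q ^ N)) by ring,
          inv_mul_cancel₀ h0]
        linear_combination (q ^ (2 * (N + 1))) * hzz
      rw [hc]; ring
  -- take limits
  have htends : Tendsto (fun N => ∑ n ∈ Finset.range (N + 1), c n) atTop (𝓝 (∑' n, c n)) :=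
    (hsc.hasSum.tendsto_sum_nat).comp (tendsto_add_atTop_nat 1)
  have htends' : Tendsto (fun N => z + z⁻¹ - 2 + (P N)⁻¹) atTop
      (𝓝 (z + z⁻¹ - 2 + L⁻¹)) := tendsto_const_nhds.add hPLi
  have hlim : ∑' n, c n = z + z⁻¹ - 2 + L⁻¹ := by
    refine tendsto_nhds_unique ?_ htends'
    exact htends.congr fun N => (key N)
  -- put everything together
  have htU : (z + z⁻¹) * tildeU 1 z q - tildeU 2 z q = ∑' n, c n := by
    rw [tildeU, tildeU, hcdef, Summable.tsum_sub (hs1.mul_left _) hs2, tsum_mul_left]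
  have : (2:ℂ) - z - z⁻¹ + (z + z⁻¹) * tildeU 1 z q - tildeU 2 z q
      = 2 - z - z⁻¹ + ((z + z⁻¹) * tildeU 1 z q - tildeU 2 z q) := by ring
  rw [this, htU, hlim]
  ring
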